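/- arXiv:1902.05055 — 3 statements merged into one kernel-verified Lean document; each statement's English description precedes it below -/
import Mathlib

section
/- Let r ≥ 2 and k ≥ 1 be integers. Then there exists an r-partite r-graph satisfying the (r,k)-cover property whose cover number is at least r³/(50k). -/
/-- A set of vertices `T` covers a hypergraph with edge family `E` if it meets every edge. -/
def IsCover {V : Type*} (E : Set (Set V)) (T : Set V) : Prop :=
  ∀ e ∈ E, (e ∩ T).Nonempty

/-- The cover number of a hypergraph: minimum size of a cover. -/
noncomputable def coverNumber {V : Type*} (E : Set (Set V)) : ℕ :=
  sInf {n | ∃ T : Set V, T.ncard = n ∧ IsCover E T}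

/-- The `(k,ℓ)`-cover property: any at most `k` edges have a cover of size at most `ℓ`. -/
def CoverProperty {V : Type*} (E : Set (Set V)) (k ℓ : ℕ) : Prop :=
  ∀ S ⊆ E, S.ncard ≤ k → ∃ T : Set V, T.ncard ≤ ℓ ∧ IsCover S T

/-- `E` is an `r`-partite `r`-graph w.r.t. the partition `part`. -/
def IsPartite {V : Type*} (r : ℕ) (part : V → Fin r) (E : Set (Set V)) : Prop :=
  ∀ e ∈ E, ∀ i : Fin r, (e ∩ part ⁻¹' {i}).ncard = 1

/-- A transversal cover: a cover containing exactly one vertex from each part. -/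
def IsTransversalCover {V : Type*} (r : ℕ) (part : V → Fin r) (E : Set (Set V))
    (T : Set V) : Prop :=
  IsCover E T ∧ ∀ i : Fin r, (T ∩ part ⁻¹' {i}).ncard = 1

/-- The `(r,k)`-cover property: any at most `k` edges have a transversal cover. -/
def PartiteCoverProperty {V : Type*} (r : ℕ) (part : V → Fin r) (E : Set (Set V))
    (k : ℕ) : Prop :=
  ∀ S ⊆ E, S.ncard ≤ k → ∃ T : Set V, IsTransversalCover r part S T

/-- The spanning subgraph of `G` consisting of the edges of colour `i`. -/
def colorSubgraph {V : Type*} (G : SimpleGraph V) {r : ℕ} (c : Sym2 V → Fin r)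
    (i : Fin r) : SimpleGraph V where
  Adj u v := G.Adj u v ∧ c s(u, v) = i
  symm := ⟨fun u v h => ⟨h.1.symm, by rw [Sym2.eq_swap]; exact h.2⟩⟩
  loopless := ⟨fun v h => G.loopless.irrefl v h.1⟩

namespace Stmt17Aux

variable (r w w' : ℕ)

abbrev Vt := Fin r × Fin w × Fin (w' + 2)

def edg (c : Fin w) (x : Fin r → Fin (w' + 2)) : Set (Vt r w w') :=
  {p | p.2.1 = c ∧ p.2.2 = x p.1}

def wt {r w' : ℕ} (x : Fin r → Fin (w' + 2)) : ℕ :=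
  (Finset.univ.filter fun q => x q ≠ 0).card

def Edges : Set (Set (Vt r w w')) :=
  {s | ∃ c x, wt x ≤ w' ∧ s = edg r w w' c x}

variable {r w w'}

lemma mem_edg {c x} {p : Vt r w w'} : p ∈ edg r w w' c x ↔ p.2.1 = c ∧ p.2.2 = x p.1 :=
  Iff.rfl

lemma pt_mem_edg (c : Fin w) (x : Fin r → Fin (w' + 2)) (q : Fin r) :
    ((q, c, x q) : Vt r w w') ∈ edg r w w' c x := ⟨rfl, rfl⟩

lemma edg_inter_part (c : Fin w) (x) (i : Fin r) :
    edg r w w' c x ∩ (Prod.fst ⁻¹' {i} : Set (Vt r w w')) = {(i, c, x i)} := by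
  ext ⟨q, c', β⟩
  constructor
  · rintro ⟨⟨h1, h2⟩, h3⟩
    simp only [Set.mem_preimage, Set.mem_singleton_iff] at h3
    simp only at h1 h2 h3
    subst h3
    simp only [Set.mem_singleton_iff, Prod.ext_iff]
    exact ⟨trivial, h1, h2⟩
  · rintro h
    simp only [Set.mem_singleton_iff] at h
    rw [Prod.ext_iff] at h
    obtain ⟨h1, h23⟩ := h
    rw [Prod.ext_iff] at h23
    obtain ⟨h2, h3⟩ := h23
    simp only at h1 h2 h3
    subst h1
    exact ⟨⟨h2, by rw [h3]⟩, rfl⟩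

lemma edg_inj (hr : 0 < r) {c c' : Fin w} {x x'} :
    edg r w w' c x = edg r w w' c' x' → c = c' ∧ x = x' := by
  intro h
  have hq : ∀ q : Fin r, ((q, c, x q) : Vt r w w') ∈ edg r w w' c' x' := by
    intro q; rw [← h]; exact pt_mem_edg c x q
  have hc : c = c' := (hq ⟨0, hr⟩).1
  exact ⟨hc, funext fun q => (hq q).2⟩

lemma isPartite : IsPartite r (Prod.fst : Vt r w w' → Fin r) (Edges r w w') := by
  rintro e ⟨c, x, -, rfl⟩ i
  rw [edg_inter_part]
  exact Set.ncard_singleton _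

lemma edges_finite : (Edges r w w').Finite := by
  apply Set.Finite.subset (Set.finite_range
    (fun p : Fin w × (Fin r → Fin (w' + 2)) => edg r w w' p.1 p.2))
  rintro e ⟨c, x, -, rfl⟩
  exact ⟨(c, x), rfl⟩

lemma cover_univ (hr : 0 < r) : IsCover (Edges r w w') Set.univ := by
  rintro e ⟨c, x, -, rfl⟩
  exact ⟨(⟨0, hr⟩, c, x ⟨0, hr⟩), pt_mem_edg c x _, trivial⟩

lemma tau_lb (hr : 0 < r) : w * (w' + 1) ≤ coverNumber (Edges r w w') := by
  classical
  refine le_csInf ⟨Set.univ.ncard, Set.univ, rfl, cover_univ hr⟩ ?_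
  rintro n ⟨T, rfl, hT⟩
  -- per-copy lower bound
  have hTfin : T.Finite := Set.toFinite T
  set F : Finset (Vt r w w') := hTfin.toFinset with hF
  have hmemF : ∀ p, p ∈ F ↔ p ∈ T := fun p => hTfin.mem_toFinset
  have hcopy : ∀ c : Fin w, w' + 1 ≤ (F.filter fun p => p.2.1 = c).card := by
    intro c
    by_contra hlt
    push_neg at hlt
    have hFc : (F.filter fun p => p.2.1 = c).card ≤ w' := by omega
    -- choose avoidance values
    have hβ : ∀ q : Fin r, ∃ β : Fin (w' + 2), β ≠ 0 ∧ ((q, c, β) : Vt r w w') ∉ T := by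
      intro q
      by_contra hall
      push_neg at hall
      have hsub : (Finset.univ.filter fun β : Fin (w' + 2) => β ≠ 0).card ≤
          (F.filter fun p => p.2.1 = c).card := by
        apply Finset.card_le_card_of_injOn (fun β => ((q, c, β) : Vt r w w'))
        · intro β hβ
          simp only [Finset.mem_coe, Finset.mem_filter, Finset.mem_univ, true_and] at hβ
          exact Finset.mem_filter.mpr ⟨(hmemF _).2 (hall β hβ), rfl⟩
        · intro a _ b _ hab
          simpa using congrArg (fun p : Vt r w w' => p.2.2) hab
      rw [Finset.filter_ne'] at hsub
      rw [Finset.card_erase_of_mem (Finset.mem_univ 0)] at hsub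
      simp only [Finset.card_univ, Fintype.card_fin] at hsub
      omega
    choose β hβ0 hβT using hβ
    set x : Fin r → Fin (w' + 2) := fun q => if ((q, c, 0) : Vt r w w') ∈ T then β q else 0
      with hx
    have hwt : wt x ≤ w' := by
      refine le_trans ?_ hFc
      apply Finset.card_le_card_of_injOn (fun q => ((q, c, (0 : Fin (w' + 2))) : Vt r w w'))
      · intro q hq
        simp only [Finset.mem_coe, Finset.mem_filter, Finset.mem_univ, true_and] at hq
        by_cases h0 : ((q, c, (0 : Fin (w' + 2))) : Vt r w w') ∈ T
        · exact Finset.mem_filter.mpr ⟨(hmemF _).2 h0, rfl⟩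
        · exfalso; apply hq; rw [hx]; simp [h0]
      · intro a _ b _ hab
        simpa using congrArg (fun p : Vt r w w' => p.1) hab
    obtain ⟨p, hpe, hpT⟩ := hT (edg r w w' c x) ⟨c, x, hwt, rfl⟩
    obtain ⟨h1, h2⟩ := (mem_edg).1 hpe
    set q := p.1 with hq
    have hp : p = (q, c, x q) := by
      rw [Prod.ext_iff, Prod.ext_iff]; exact ⟨rfl, h1, h2⟩
    rw [hp] at hpT
    by_cases h0 : ((q, c, (0 : Fin (w' + 2))) : Vt r w w') ∈ T
    · have : x q = β q := by rw [hx]; simp [h0]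
      rw [this] at hpT
      exact hβT q hpT
    · have : x q = 0 := by rw [hx]; simp [h0]
      rw [this] at hpT
      exact h0 hpT
  -- sum up
  have hcard : T.ncard = F.card := Set.ncard_eq_toFinset_card T hTfin
  rw [hcard]
  have hsum : F.card = ∑ c : Fin w, (F.filter fun p => p.2.1 = c).card :=
    Finset.card_eq_sum_card_fiberwise (fun p _ => Finset.mem_univ p.2.1)
  rw [hsum]
  calc w * (w' + 1) = ∑ _c : Fin w, (w' + 1) := by
        rw [Finset.sum_const, Finset.card_univ, Fintype.card_fin, smul_eq_mul]
    _ ≤ ∑ c : Fin w, (F.filter fun p => p.2.1 = c).card :=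
        Finset.sum_le_sum fun c _ => hcopy c


lemma sum_div_le {α : Type*} (s : Finset α) (a : α → ℕ) (t : ℕ) (ht : 0 < t) :
    ∑ i ∈ s, a i / t ≤ (∑ i ∈ s, a i) / t := by
  rw [Nat.le_div_iff_mul_le ht, Finset.sum_mul]
  exact Finset.sum_le_sum fun i _ => Nat.div_mul_le_self _ _

lemma greedy {α β : Type*} [DecidableEq α] [DecidableEq β] [Nonempty β] (N : ℕ) :
    ∀ (G : Finset α), G.card ≤ N → ∀ (A : α → Finset β), (∀ g ∈ G, N ≤ (A g).card) →
    ∃ f : α → β, Set.InjOn f G ∧ ∀ g ∈ G, f g ∈ A g := by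
  intro G
  induction G using Finset.induction with
  | empty =>
    intro _ A _
    exact ⟨fun _ => Classical.arbitrary β, by simp, by simp⟩
  | @insert a s ha ih =>
    intro hcard A hA
    have hs : s.card ≤ N := le_trans (Finset.card_le_card (Finset.subset_insert a s)) hcard
    obtain ⟨f, hfinj, hfA⟩ := ih hs A (fun g hg => hA g (Finset.mem_insert_of_mem hg))
    have hAa : N ≤ (A a).card := hA a (Finset.mem_insert_self a s)
    have himg : (s.image f).card < (A a).card := by
      calc (s.image f).card ≤ s.card := Finset.card_image_le
        _ < (insert a s).card := by rw [Finset.card_insert_of_notMem ha]; omega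
        _ ≤ N := hcard
        _ ≤ (A a).card := hAa
    have hex : ∃ y ∈ A a, y ∉ s.image f := by
      by_contra h
      push_neg at h
      exact absurd (Finset.card_le_card h) (not_le.mpr himg)
    obtain ⟨y, hyA, hy⟩ := hex
    refine ⟨Function.update f a y, ?_, ?_⟩
    · intro u hu v hv huv
      simp only [Finset.coe_insert, Set.mem_insert_iff] at hu hv
      rcases hu with rfl | hu <;> rcases hv with rfl | hv
      · rfl
      · exfalso; rw [Function.update_self, Function.update_of_ne (by rintro rfl; exact ha hv)] at huv
        exact hy (huv ▸ Finset.mem_image_of_mem f hv)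
      · exfalso; rw [Function.update_self, Function.update_of_ne (by rintro rfl; exact ha hu)] at huv
        exact hy (huv ▸ Finset.mem_image_of_mem f hu)
      · rw [Function.update_of_ne (by rintro rfl; exact ha hu),
          Function.update_of_ne (by rintro rfl; exact ha hv)] at huv
        exact hfinj hu hv huv
    · intro g hg
      rcases Finset.mem_insert.mp hg with rfl | hg2
      · rw [Function.update_self]; exact hyA
      · rw [Function.update_of_ne (by rintro rfl; exact ha hg2)]; exact hfA g hg2

lemma coverProp (t k : ℕ) (hr : 0 < r) (hw : 0 < w) (ht : 0 < t)
    (hcond : min w k + k / t ≤ r - t * w') :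
    PartiteCoverProperty r (Prod.fst : Vt r w w' → Fin r) (Edges r w w') k := by
  classical
  intro S hSE hSk
  have hSfin : S.Finite := Set.Finite.subset edges_finite hSE
  set Q : Finset (Fin w × (Fin r → Fin (w' + 2))) :=
    Finset.univ.filter (fun p => wt p.2 ≤ w' ∧ edg r w w' p.1 p.2 ∈ S) with hQdef
  have memQ : ∀ p, p ∈ Q ↔ wt p.2 ≤ w' ∧ edg r w w' p.1 p.2 ∈ S := by
    intro p; simp [hQdef]
  -- card bound
  have hQk : Q.card ≤ k := by
    have h1 : (Q.image (fun p => edg r w w' p.1 p.2)).card = Q.card := by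
      apply Finset.card_image_of_injOn
      intro p _ p' _ he
      have h := edg_inj hr he
      exact Prod.ext h.1 h.2
    have h2 : ((Q.image (fun p => edg r w w' p.1 p.2) : Finset (Set (Vt r w w'))) :
        Set (Set (Vt r w w'))) ⊆ S := by
      intro e he
      simp only [Finset.coe_image, Set.mem_image, Finset.mem_coe] at he
      obtain ⟨p, hp, rfl⟩ := he
      exact ((memQ p).1 hp).2
    calc Q.card = (Q.image (fun p => edg r w w' p.1 p.2)).card := h1.symm
      _ = ((Q.image (fun p => edg r w w' p.1 p.2) : Finset (Set (Vt r w w'))) :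
          Set (Set (Vt r w w'))).ncard := (Set.ncard_coe_finset _).symm
      _ ≤ S.ncard := Set.ncard_le_ncard h2 hSfin
      _ ≤ k := hSk
  -- fibers
  set Qc : Fin w → Finset (Fin r → Fin (w' + 2)) :=
    fun c => (Q.filter fun p => p.1 = c).image Prod.snd with hQcdef
  have memQc : ∀ c x, x ∈ Qc c ↔ (c, x) ∈ Q := by
    intro c x
    simp only [hQcdef, Finset.mem_image, Finset.mem_filter]
    constructor
    · rintro ⟨p, ⟨hpQ, hc⟩, hx⟩
      have : p = (c, x) := Prod.ext hc hx
      rwa [this] at hpQ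
    · intro h; exact ⟨(c, x), ⟨h, rfl⟩, rfl⟩
  have hQc_wt : ∀ c x, x ∈ Qc c → wt x ≤ w' :=
    fun c x hx => ((memQ _).1 ((memQc c x).1 hx)).1
  have hQc_card : ∀ c, (Qc c).card = (Q.filter fun p => p.1 = c).card := by
    intro c
    apply Finset.card_image_of_injOn
    intro p hp p' hp' hpp
    simp only [Finset.coe_filter, Set.mem_setOf_eq] at hp hp'
    exact Prod.ext (hp.2.trans hp'.2.symm) hpp
  -- index within fiber
  set idx : Fin w → (Fin r → Fin (w' + 2)) → ℕ :=
    fun c x => List.idxOf x (Qc c).toList with hidxdef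
  have idx_lt : ∀ c x, x ∈ Qc c → idx c x < (Qc c).card := by
    intro c x hx
    rw [hidxdef]
    simp only
    rw [← Finset.length_toList]
    exact List.idxOf_lt_length_iff.mpr (Finset.mem_toList.mpr hx)
  have idx_inj : ∀ c, Set.InjOn (idx c) (Qc c) := by
    intro c x hx y hy hxy
    exact (List.idxOf_inj (Finset.mem_toList.mpr hx)).1 hxy
  -- groups
  set G : Finset (Fin w × ℕ) := Q.image (fun p => (p.1, idx p.1 p.2 / t)) with hGdef
  set mg : Fin w × ℕ → Finset (Fin r → Fin (w' + 2)) :=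
    fun g => (Qc g.1).filter (fun x => idx g.1 x / t = g.2) with hmgdef
  have hmg_card : ∀ g, (mg g).card ≤ t := by
    intro g
    have h1 : (mg g).card ≤ (Finset.Ico (g.2 * t) (g.2 * t + t)).card := by
      apply Finset.card_le_card_of_injOn (idx g.1)
      · intro x hx
        simp only [Finset.mem_coe, hmgdef, Finset.mem_filter] at hx
        obtain ⟨hx1, hx2⟩ := hx
        have e1 : g.2 * t ≤ idx g.1 x := by
          rw [← hx2]
          exact Nat.div_mul_le_self _ _
        have e2 : idx g.1 x < (g.2 + 1) * t :=
          (Nat.div_lt_iff_lt_mul ht).1 (by omega)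
        rw [Nat.succ_mul] at e2
        rw [Finset.mem_coe, Finset.mem_Ico]
        exact ⟨e1, e2⟩
      · intro a ha b hb hab
        simp only [hmgdef, Finset.coe_filter, Set.mem_setOf_eq] at ha hb
        exact idx_inj g.1 ha.1 hb.1 hab
    rwa [Nat.card_Ico, Nat.add_sub_cancel_left] at h1
  -- group count bound
  have hGcard : G.card ≤ r - t * w' := by
    set NE : Finset (Fin w) := Finset.univ.filter (fun c => (Qc c).card ≠ 0) with hNEdef
    have hGfst : ∀ g ∈ G, g.1 ∈ NE := by
      intro g hg
      rw [hGdef] at hg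
      obtain ⟨p, hp, rfl⟩ := Finset.mem_image.mp hg
      simp only [hNEdef, Finset.mem_filter, Finset.mem_univ, true_and]
      have : p.2 ∈ Qc p.1 := (memQc p.1 p.2).2 hp
      exact fun h0 => by rw [Finset.card_eq_zero] at h0; rw [h0] at this; simp at this
    have hfib : G.card = ∑ c ∈ NE, (G.filter fun g => g.1 = c).card :=
      Finset.card_eq_sum_card_fiberwise hGfst
    have hfib_le : ∀ c ∈ NE, (G.filter fun g => g.1 = c).card ≤
        ((Qc c).card - 1) / t + 1 := by
      intro c _
      have hsub : (G.filter fun g => g.1 = c) ⊆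
          (Finset.range (((Qc c).card - 1) / t + 1)).image (fun i => (c, i)) := by
        intro g hg
        obtain ⟨hgG, hgc⟩ := Finset.mem_filter.mp hg
        rw [hGdef] at hgG
        obtain ⟨p, hp, rfl⟩ := Finset.mem_image.mp hgG
        have hc' : p.1 = c := hgc
        subst hc'
        have hpx : p.2 ∈ Qc p.1 := (memQc p.1 p.2).2 hp
        have hlt := idx_lt p.1 p.2 hpx
        apply Finset.mem_image.mpr
        refine ⟨idx p.1 p.2 / t, ?_, rfl⟩
        rw [Finset.mem_range]
        exact Nat.lt_succ_of_le (Nat.div_le_div_right (by omega))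
      calc (G.filter fun g => g.1 = c).card
          ≤ ((Finset.range (((Qc c).card - 1) / t + 1)).image (fun i => (c, i))).card :=
            Finset.card_le_card hsub
        _ ≤ (((Qc c).card - 1) / t + 1) := by
            apply le_trans Finset.card_image_le
            rw [Finset.card_range]
    have hsc : ∑ c : Fin w, (Qc c).card = Q.card := by
      have := Finset.card_eq_sum_card_fiberwise
        (f := fun p : Fin w × (Fin r → Fin (w' + 2)) => p.1) (s := Q)
        (t := Finset.univ) (fun p _ => Finset.mem_univ p.1)
      rw [this]
      exact Finset.sum_congr rfl fun c _ => hQc_card c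
    have hNEk : NE.card ≤ min w k := by
      apply le_min
      · exact le_trans (Finset.card_le_card (Finset.subset_univ NE))
          (by rw [Finset.card_univ, Fintype.card_fin])
      · calc NE.card = ∑ _c ∈ NE, 1 := by rw [Finset.sum_const, smul_eq_mul, mul_one]
          _ ≤ ∑ c ∈ NE, (Qc c).card := Finset.sum_le_sum (fun c hc => by
              simp only [hNEdef, Finset.mem_filter] at hc; omega)
          _ ≤ ∑ c : Fin w, (Qc c).card :=
              Finset.sum_le_sum_of_subset (Finset.subset_univ NE)
          _ = Q.card := hsc
          _ ≤ k := hQk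
    have hsum1 : ∑ c ∈ NE, (((Qc c).card - 1) / t + 1) ≤ k / t + min w k := by
      rw [Finset.sum_add_distrib, Finset.sum_const, smul_eq_mul, mul_one]
      have h1 : ∑ c ∈ NE, ((Qc c).card - 1) / t ≤ k / t := by
        calc ∑ c ∈ NE, ((Qc c).card - 1) / t ≤ (∑ c ∈ NE, ((Qc c).card - 1)) / t :=
            sum_div_le _ _ t ht
          _ ≤ k / t := by
            apply Nat.div_le_div_right
            calc ∑ c ∈ NE, ((Qc c).card - 1) ≤ ∑ c ∈ NE, (Qc c).card :=
                Finset.sum_le_sum fun c _ => Nat.sub_le _ _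
              _ ≤ ∑ c : Fin w, (Qc c).card :=
                Finset.sum_le_sum_of_subset (Finset.subset_univ NE)
              _ = Q.card := hsc
              _ ≤ k := hQk
      omega
    calc G.card = ∑ c ∈ NE, (G.filter fun g => g.1 = c).card := hfib
      _ ≤ ∑ c ∈ NE, (((Qc c).card - 1) / t + 1) := Finset.sum_le_sum hfib_le
      _ ≤ k / t + min w k := hsum1
      _ ≤ r - t * w' := by omega
  -- availability
  have hAcard : ∀ g ∈ G, r - t * w' ≤
      (Finset.univ.filter (fun q : Fin r => ∀ x ∈ mg g, x q = 0)).card := by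
    intro g _
    have hcompl : (Finset.univ.filter (fun q : Fin r => ¬ ∀ x ∈ mg g, x q = 0)).card
        ≤ t * w' := by
      have hsub : (Finset.univ.filter (fun q : Fin r => ¬ ∀ x ∈ mg g, x q = 0)) ⊆
          (mg g).biUnion (fun x => Finset.univ.filter (fun q => x q ≠ 0)) := by
        intro q hq
        simp only [Finset.mem_filter, Finset.mem_univ, true_and, not_forall] at hq
        obtain ⟨x, hx, hxq⟩ := hq
        exact Finset.mem_biUnion.mpr ⟨x, hx, by
          simp only [Finset.mem_filter, Finset.mem_univ, true_and]; exact hxq⟩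
      calc (Finset.univ.filter (fun q : Fin r => ¬ ∀ x ∈ mg g, x q = 0)).card
          ≤ ((mg g).biUnion (fun x => Finset.univ.filter (fun q => x q ≠ 0))).card :=
            Finset.card_le_card hsub
        _ ≤ ∑ x ∈ mg g, (Finset.univ.filter (fun q => x q ≠ 0)).card :=
            Finset.card_biUnion_le
        _ ≤ ∑ _x ∈ mg g, w' := Finset.sum_le_sum (fun x hx => by
            have : x ∈ Qc g.1 := (Finset.mem_filter.mp hx).1
            exact hQc_wt g.1 x this)
        _ = (mg g).card * w' := by rw [Finset.sum_const, smul_eq_mul]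
        _ ≤ t * w' := Nat.mul_le_mul_right w' (hmg_card g)
    have htot := Finset.card_filter_add_card_filter_not
      (s := (Finset.univ : Finset (Fin r))) (p := fun q => ∀ x ∈ mg g, x q = 0)
    rw [Finset.card_univ, Fintype.card_fin] at htot
    exact le_trans (Nat.sub_le_sub_left hcompl r)
      (tsub_le_iff_right.mpr (le_of_eq htot.symm))
  haveI : Nonempty (Fin r) := ⟨⟨0, hr⟩⟩
  obtain ⟨f, hfinj, hfA⟩ := greedy (r - t * w') G hGcard
    (fun g => Finset.univ.filter (fun q : Fin r => ∀ x ∈ mg g, x q = 0)) hAcard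
  -- build the transversal cover
  set pick : Fin r → Fin w := fun q =>
    if h : ∃ g ∈ G, f g = q then (Classical.choose h).1 else ⟨0, hw⟩ with hpickdef
  set cov : Fin r → Vt r w w' := fun q => (q, pick q, 0) with hcovdef
  have hcov1 : ∀ q, (cov q).1 = q := fun q => rfl
  refine ⟨Set.range cov, ?_, ?_⟩
  · -- covers S
    intro e heS
    obtain ⟨c, x, hwt, rfl⟩ := hSE heS
    have hcx : (c, x) ∈ Q := (memQ _).2 ⟨hwt, heS⟩
    have hxQc : x ∈ Qc c := (memQc c x).2 hcx
    set g : Fin w × ℕ := (c, idx c x / t) with hgdef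
    have hgG : g ∈ G := Finset.mem_image.mpr ⟨(c, x), hcx, rfl⟩
    set q := f g with hqdef
    have hex : ∃ g' ∈ G, f g' = q := ⟨g, hgG, rfl⟩
    have hpickq : pick q = c := by
      simp only [hpickdef]
      rw [dif_pos hex]
      have hspec := Classical.choose_spec hex
      obtain ⟨hg1, hg2⟩ := hspec
      have hgg : Classical.choose hex = g := hfinj hg1 hgG hg2
      rw [hgg]
    have hcovq : cov q = (q, c, 0) := by
      simp only [hcovdef]
      rw [hpickq]
    have hq0 : x q = 0 := by
      have hqA := hfA g hgG
      simp only [Finset.mem_filter, Finset.mem_univ, true_and] at hqA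
      apply hqA
      exact Finset.mem_filter.mpr ⟨hxQc, rfl⟩
    refine ⟨(q, c, 0), ⟨rfl, hq0.symm⟩, ⟨q, hcovq⟩⟩
  · -- transversal
    intro i
    have hset : Set.range cov ∩ (Prod.fst ⁻¹' {i} : Set (Vt r w w')) = {cov i} := by
      ext p
      constructor
      · rintro ⟨⟨q, rfl⟩, hp⟩
        simp only [Set.mem_preimage, Set.mem_singleton_iff] at hp
        rw [hcov1] at hp; rw [Set.mem_singleton_iff, hp]
      · rintro hp
        rw [Set.mem_singleton_iff] at hp
        subst hp
        exact ⟨⟨i, rfl⟩, rfl⟩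
    rw [hset]
    exact Set.ncard_singleton _


section Transfer
variable {V W : Type*} (e : V ≃ W) {r k : ℕ} (part : V → Fin r) (E : Set (Set V))

lemma image_inter_part (s : Set V) (i : Fin r) :
    (e '' s) ∩ ((part ∘ e.symm) ⁻¹' {i}) = e '' (s ∩ part ⁻¹' {i}) := by
  ext v
  simp only [Set.mem_inter_iff, Set.mem_image, Set.mem_preimage, Function.comp_apply,
    Set.mem_singleton_iff]
  constructor
  · rintro ⟨⟨u, hu, rfl⟩, hp⟩
    rw [Equiv.symm_apply_apply] at hp
    exact ⟨u, ⟨hu, hp⟩, rfl⟩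
  · rintro ⟨u, ⟨hu, hp⟩, rfl⟩
    exact ⟨⟨u, hu, rfl⟩, by rw [Equiv.symm_apply_apply]; exact hp⟩

lemma isPartite_transfer (h : IsPartite r part E) :
    IsPartite r (part ∘ e.symm) ((Set.image e) '' E) := by
  rintro e' ⟨s, hs, rfl⟩ i
  rw [image_inter_part, Set.ncard_image_of_injective _ e.injective]
  exact h s hs i

lemma coverProperty_transfer (h : PartiteCoverProperty r part E k) :
    PartiteCoverProperty r (part ∘ e.symm) ((Set.image e) '' E) k := by
  intro S' hS' hS'k
  set S : Set (Set V) := (Set.image e.symm) '' S' with hSdef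
  have hSsub : S ⊆ E := by
    rintro s ⟨s', hs', rfl⟩
    obtain ⟨u, hu, rfl⟩ := hS' hs'
    rw [Equiv.symm_image_image]
    exact hu
  have hScard : S.ncard ≤ k := by
    rw [hSdef, Set.ncard_image_of_injective _ (Set.image_injective.mpr e.symm.injective)]
    exact hS'k
  obtain ⟨T, hTcov, hTpart⟩ := h S hSsub hScard
  refine ⟨e '' T, ?_, ?_⟩
  · intro s' hs'
    have hmem : e.symm '' s' ∈ S := ⟨s', hs', rfl⟩
    obtain ⟨u, hu1, hu2⟩ := hTcov _ hmem
    obtain ⟨v, hv, hveq⟩ := hu1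
    refine ⟨e u, ?_, Set.mem_image_of_mem e hu2⟩
    rw [← hveq, Equiv.apply_symm_apply]
    exact hv
  · intro i
    rw [image_inter_part, Set.ncard_image_of_injective _ e.injective]
    exact hTpart i

lemma coverNumber_transfer : coverNumber ((Set.image e) '' E) = coverNumber E := by
  unfold coverNumber
  congr 1
  ext n
  constructor
  · rintro ⟨T, rfl, hT⟩
    refine ⟨e.symm '' T, Set.ncard_image_of_injective _ e.symm.injective, ?_⟩
    intro s hs
    obtain ⟨u, hu1, hu2⟩ := hT (e '' s) ⟨s, hs, rfl⟩
    obtain ⟨v, hv, rfl⟩ := hu1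
    exact ⟨v, hv, ⟨e v, hu2, Equiv.symm_apply_apply e v⟩⟩
  · rintro ⟨T, rfl, hT⟩
    refine ⟨e '' T, Set.ncard_image_of_injective _ e.injective, ?_⟩
    rintro s' ⟨s, hs, rfl⟩
    obtain ⟨u, hu1, hu2⟩ := hT s hs
    exact ⟨e u, Set.mem_image_of_mem _ hu1, Set.mem_image_of_mem _ hu2⟩

end Transfer

lemma build (r w w' t k : ℕ) (hr : 2 ≤ r) (hw : 0 < w) (ht : 0 < t)
    (hcond : min w k + k / t ≤ r - t * w')
    (hbound : (r : ℝ) ^ 3 / (50 * (k : ℝ)) ≤ ((w * (w' + 1) : ℕ) : ℝ)) :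
    ∃ (n : ℕ) (part : Fin n → Fin r) (E : Set (Set (Fin n))),
      IsPartite r part E ∧ PartiteCoverProperty r part E k ∧
      ((r : ℝ) ^ 3 / (50 * (k : ℝ)) ≤ (coverNumber E : ℝ)) := by
  have hr0 : 0 < r := by omega
  set eqv := Fintype.equivFin (Vt r w w') with heqv
  refine ⟨Fintype.card (Vt r w w'), Prod.fst ∘ eqv.symm,
    (Set.image eqv) '' (Edges r w w'),
    isPartite_transfer eqv _ _ isPartite,
    coverProperty_transfer eqv _ _ (coverProp t k hr0 hw ht hcond), ?_⟩
  rw [coverNumber_transfer]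
  refine le_trans hbound ?_
  exact Nat.cast_le.mpr (tau_lb hr0)


theorem stmt17' (r k : ℕ) (hr : 2 ≤ r) (hk : 1 ≤ k) :
    ∃ (n : ℕ) (part : Fin n → Fin r) (E : Set (Set (Fin n))),
      IsPartite r part E ∧ PartiteCoverProperty r part E k ∧
      ((r : ℝ) ^ 3 / (50 * (k : ℝ)) ≤ (coverNumber E : ℝ)) := by
  have hk0 : (0 : ℝ) < 50 * (k : ℝ) := by
    have : (1 : ℝ) ≤ (k : ℝ) := by exact_mod_cast hk
    linarith
  by_cases h1 : k ≤ r
  · -- small k : matching of r^3 edges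
    apply build r (r ^ 3) 0 (k + 1) k hr (by positivity) (by omega)
    · have hdiv : k / (k + 1) = 0 := Nat.div_eq_of_lt (by omega)
      have hmin : min (r ^ 3) k ≤ k := min_le_right _ _
      omega
    · rw [div_le_iff₀ hk0]
      have h50 : (1 : ℝ) ≤ 50 * (k : ℝ) := by
        have : (1 : ℝ) ≤ (k : ℝ) := by exact_mod_cast hk
        linarith
      have hrc : (0 : ℝ) ≤ (r : ℝ) ^ 3 := by positivity
      calc (r : ℝ) ^ 3 = (r : ℝ) ^ 3 * 1 := by ring
        _ ≤ (r : ℝ) ^ 3 * (50 * (k : ℝ)) := by nlinarith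
        _ = ((r ^ 3 * (0 + 1) : ℕ) : ℝ) * (50 * (k : ℝ)) := by push_cast; ring
  · push_neg at h1
    by_cases h2 : r * r ≤ 50 * k
    · -- large k : matching of r edges
      apply build r r 0 (k + 1) k hr (by omega) (by omega)
      · have hdiv : k / (k + 1) = 0 := Nat.div_eq_of_lt (by omega)
        have hmin : min r k ≤ r := min_le_left _ _
        omega
      · rw [div_le_iff₀ hk0]
        have h2' : ((r : ℝ) * r) ≤ 50 * (k : ℝ) := by exact_mod_cast h2
        have hrc : (0 : ℝ) ≤ (r : ℝ) := by positivity
        calc (r : ℝ) ^ 3 = (r : ℝ) * ((r : ℝ) * r) := by ring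
          _ ≤ (r : ℝ) * (50 * (k : ℝ)) := by nlinarith
          _ = ((r * (0 + 1) : ℕ) : ℝ) * (50 * (k : ℝ)) := by push_cast; ring
    · push_neg at h2  -- 50 * k < r * r,  r < k
      have hr51 : 51 ≤ r := by
        by_contra hcon
        push_neg at hcon
        have e1 : r * r ≤ 50 * r := Nat.mul_le_mul_right r (by omega)
        have e2 : 50 * r < 50 * k := by omega
        omega
      set t : ℕ := 4 * k / r + 1 with hteq
      set w : ℕ := r / 4 with hweq
      set w' : ℕ := r / (2 * t) with hw'eq
      have hrk : r ≤ k := by omega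
      have ht0 : 0 < t := by rw [hteq]; exact Nat.succ_pos _
      have h2t0 : 0 < 2 * t := by omega
      -- key nat facts
      have n3 : t * r ≤ 5 * k := by
        have hd : (4 * k / r) * r ≤ 4 * k := Nat.div_mul_le_self (4 * k) r
        calc t * r = (4 * k / r) * r + r := by rw [hteq]; ring
          _ ≤ 4 * k + r := by omega
          _ ≤ 5 * k := by omega
      have f1 : 4 * (k / t) < r := by
        by_contra hcon
        push_neg at hcon
        have e1 : (k / t) * t ≤ k := Nat.div_mul_le_self k t
        have e2 : 4 * k < r * t := by
          have hmod := Nat.div_add_mod (4 * k) r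
          have hmod2 := Nat.mod_lt (4 * k) (show 0 < r by omega)
          calc 4 * k = r * (4 * k / r) + (4 * k) % r := hmod.symm
            _ < r * (4 * k / r) + r := by omega
            _ = r * (4 * k / r + 1) := by ring
            _ = r * t := by rw [hteq]
        have e3 : r * t ≤ (4 * (k / t)) * t := Nat.mul_le_mul_right t hcon
        have e4 : (4 * (k / t)) * t = 4 * ((k / t) * t) := by ring
        omega
      have f2 : 2 * (t * w') ≤ r := by
        have e1 : w' * (2 * t) ≤ r := by rw [hw'eq]; exact Nat.div_mul_le_self r (2 * t)
        have e2 : w' * (2 * t) = 2 * (t * w') := by ring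
        omega
      have n2 : r < 2 * t * (w' + 1) := by
        have h1' := Nat.div_add_mod r (2 * t)
        have h2' := Nat.mod_lt r h2t0
        calc r = 2 * t * (r / (2 * t)) + r % (2 * t) := h1'.symm
          _ < 2 * t * (r / (2 * t)) + 2 * t := by omega
          _ = 2 * t * (r / (2 * t) + 1) := by ring
          _ = 2 * t * (w' + 1) := by rw [hw'eq]
      have n1 : r ≤ 5 * w := by rw [hweq]; omega
      have hw0 : 0 < w := by rw [hweq]; omega
      apply build r w w' t k hr hw0 ht0
      · -- hcond
        have hmin : min w k ≤ w := min_le_left _ _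
        have hw4 : w = r / 4 := hweq
        omega
      · -- hbound
        rw [div_le_iff₀ hk0]
        have main : r ^ 3 ≤ w * (w' + 1) * (50 * k) := by
          calc r ^ 3 = r * r * r := by ring
            _ ≤ (5 * w) * (2 * t * (w' + 1)) * r :=
              Nat.mul_le_mul_right r (Nat.mul_le_mul n1 n2.le)
            _ = (w * (w' + 1)) * (t * r) * 10 := by ring
            _ ≤ (w * (w' + 1)) * (5 * k) * 10 :=
              Nat.mul_le_mul_right 10 (Nat.mul_le_mul_left _ n3)
            _ = w * (w' + 1) * (50 * k) := by ring
        calc (r : ℝ) ^ 3 = ((r ^ 3 : ℕ) : ℝ) := by push_cast; ring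
          _ ≤ ((w * (w' + 1) * (50 * k) : ℕ) : ℝ) := Nat.cast_le.mpr main
          _ = ((w * (w' + 1) : ℕ) : ℝ) * (50 * (k : ℝ)) := by push_cast; ring


end Stmt17Aux

/-- for every `k ≥ 1` and `r ≥ 2`, there is an `r`-partite `r`-graph
with the `(r,k)`-cover property whose cover number is at least `r³/(50k)`. -/
theorem stmt17 (r k : ℕ) (hr : 2 ≤ r) (hk : 1 ≤ k) :
    ∃ (n : ℕ) (part : Fin n → Fin r) (E : Set (Set (Fin n))),
      IsPartite r part E ∧ PartiteCoverProperty r part E k ∧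
      ((r : ℝ) ^ 3 / (50 * (k : ℝ)) ≤ (coverNumber E : ℝ)) := by
  exact Stmt17Aux.stmt17' r k hr hk
end

section
/- Let r ≥ 1 be an integer and let G be a finite simple graph on n vertices with minimum degree δ(G) ≥ (1 − 1/2^r)·n. Then for every edge-colouring of G with colours 1,…,r, there exist monochromatic components C_1,…,C_r, where C_i is a monochromatic component of colour i, whose union is the whole vertex set of G (i.e., V(G) can be covered by monochromatic components of pairwise distinct colours). -/
/-- Core linear-algebra lemma: a "skew cross-intersecting" system of value tuples
over `Fin r` coordinates has at most `2^r` members. -/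
theorem lemmaP {r : ℕ} {ι : Type*} [Fintype ι] (a p : ι → Fin r → ℝ)
    (h1 : ∀ j i, p j i ≠ a j i)
    (h2 : ∀ j k : ι, j ≠ k → ∃ i, p k i = a j i) :
    Fintype.card ι ≤ 2 ^ r := by
  classical
  set u : ι → (Finset (Fin r) → ℝ) :=
    fun j S => ∏ i ∈ Finset.univ \ S, (-(a j i)) with hu
  set w : ι → (Finset (Fin r) → ℝ) :=
    fun k S => ∏ i ∈ S, p k i with hw
  have pair : ∀ j k : ι, ∑ S : Finset (Fin r), w k S * u j S
      = ∏ i : Fin r, (p k i - a j i) := by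
    intro j k
    have hpa := Finset.prod_add (fun i => p k i) (fun i => -(a j i)) Finset.univ
    simp only [Finset.powerset_univ] at hpa
    have : ∀ i : Fin r, p k i - a j i = p k i + (-(a j i)) := by intro i; ring
    rw [Finset.prod_congr rfl (fun i _ => this i), hpa]
  have indep : LinearIndependent ℝ u := by
    rw [Fintype.linearIndependent_iff]
    intro g hg k
    have h0 : ∑ S : Finset (Fin r), w k S * (∑ j, g j • u j) S = 0 := by
      rw [hg]; simp
    have h1' : ∑ S : Finset (Fin r), w k S * (∑ j, g j • u j) S
        = ∑ j, g j * ∏ i : Fin r, (p k i - a j i) := by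
      have step1 : ∀ S : Finset (Fin r), w k S * (∑ j, g j • u j) S
          = ∑ j, g j * (w k S * u j S) := by
        intro S
        simp only [Finset.sum_apply, Pi.smul_apply, smul_eq_mul, Finset.mul_sum]
        exact Finset.sum_congr rfl fun j _ => by ring
      rw [Finset.sum_congr rfl (fun S _ => step1 S), Finset.sum_comm]
      exact Finset.sum_congr rfl fun j _ => by
        rw [← Finset.mul_sum, pair j k]
    rw [h1'] at h0
    have hoff : ∀ j ∈ Finset.univ, j ≠ k → g j * ∏ i : Fin r, (p k i - a j i) = 0 := by
      intro j _ hj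
      obtain ⟨i, hi⟩ := h2 j k hj
      rw [Finset.prod_eq_zero (Finset.mem_univ i) (by rw [hi]; ring)]
      ring
    rw [Finset.sum_eq_single_of_mem k (Finset.mem_univ k) hoff] at h0
    have hd : ∏ i : Fin r, (p k i - a k i) ≠ 0 :=
      Finset.prod_ne_zero_iff.2 fun i _ => sub_ne_zero_of_ne (h1 k i)
    exact (mul_eq_zero.1 h0).resolve_right hd
  have := indep.fintype_card_le_finrank
  rwa [Module.finrank_pi, Fintype.card_finset, Fintype.card_fin] at this


/-- if `G` is a graph on `n` vertices with minimum degree at least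
`(1 - 1/2^r)·n`, then in every `r`-edge-colouring of `G` the vertex set can be
covered by monochromatic components of pairwise distinct colours (one component
of each colour, `f i` being a representative vertex of the colour-`i` component). -/
theorem stmt18 {V : Type*} [Fintype V] [Nonempty V] (r : ℕ) (hr : 1 ≤ r)
    (G : SimpleGraph V) [DecidableRel G.Adj]
    (hdeg : ((1 : ℝ) - 1 / 2 ^ r) * (Fintype.card V : ℝ) ≤ (G.minDegree : ℝ))
    (c : Sym2 V → Fin r) :
    ∃ f : Fin r → V, ∀ v : V, ∃ i : Fin r,
      (colorSubgraph G c i).Reachable (f i) v := by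
  classical
  set n := Fintype.card V with hn
  -- the numeric embedding of colour components
  set κ : Fin r → V → ℝ := fun i v =>
    ((Fintype.equivFin V (((colorSubgraph G c i).connectedComponentMk v).out) : ℕ) : ℝ) with hκ
  have κ_eq : ∀ (i : Fin r) (x y : V),
      κ i x = κ i y ↔ (colorSubgraph G c i).Reachable x y := by
    intro i x y
    constructor
    · intro h
      have h1 : (Fintype.equivFin V (((colorSubgraph G c i).connectedComponentMk x).out) : ℕ)
          = (Fintype.equivFin V (((colorSubgraph G c i).connectedComponentMk y).out) : ℕ) :=
        Nat.cast_injective h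
      have h2 : ((colorSubgraph G c i).connectedComponentMk x).out
          = ((colorSubgraph G c i).connectedComponentMk y).out :=
        (Fintype.equivFin V).injective (Fin.val_injective h1)
      have h3 : (colorSubgraph G c i).connectedComponentMk x
          = (colorSubgraph G c i).connectedComponentMk y := by
        rw [← Quot.out_eq ((colorSubgraph G c i).connectedComponentMk x),
          ← Quot.out_eq ((colorSubgraph G c i).connectedComponentMk y)]
        exact congrArg _ h2
      exact SimpleGraph.ConnectedComponent.exact h3
    · intro h
      have h3 : (colorSubgraph G c i).connectedComponentMk x
          = (colorSubgraph G c i).connectedComponentMk y :=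
        SimpleGraph.ConnectedComponent.sound h
      simp only [hκ, h3]
  by_contra hno
  push_neg at hno
  -- non-coverable finsets
  set Bad : Finset (Finset V) := Finset.univ.filter (fun S =>
    ¬ ∃ t : Fin r → V, ∀ v ∈ S, ∃ i : Fin r,
      (colorSubgraph G c i).Reachable (t i) v) with hBad
  have hBadne : Bad.Nonempty := by
    refine ⟨Finset.univ, Finset.mem_filter.2 ⟨Finset.mem_univ _, ?_⟩⟩
    rintro ⟨t, ht⟩
    obtain ⟨v, hv⟩ := hno t
    obtain ⟨i, hi⟩ := ht v (Finset.mem_univ v)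
    exact hv i hi
  obtain ⟨M, hMBad, hMmin⟩ := Bad.exists_min_image Finset.card hBadne
  have hMnc : ¬ ∃ t : Fin r → V, ∀ v ∈ M, ∃ i : Fin r,
      (colorSubgraph G c i).Reachable (t i) v := (Finset.mem_filter.1 hMBad).2
  -- M is nonempty
  have hMne : M.Nonempty := by
    rcases M.eq_empty_or_nonempty with h | h
    · exact absurd ⟨fun _ => Classical.arbitrary V, by simp [h]⟩ hMnc
    · exact h
  -- covers of M minus a point
  have hcov : ∀ j : {x // x ∈ M}, ∃ t : Fin r → V, ∀ v ∈ M.erase j.1, ∃ i : Fin r,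
      (colorSubgraph G c i).Reachable (t i) v := by
    intro j
    by_contra h
    have hmem : M.erase j.1 ∈ Bad := Finset.mem_filter.2 ⟨Finset.mem_univ _, h⟩
    have := hMmin _ hmem
    have hlt : (M.erase j.1).card < M.card := Finset.card_erase_lt_of_mem j.2
    omega
  choose te hte using hcov
  -- the misses
  have hmiss : ∀ (j : {x // x ∈ M}) (i : Fin r),
      ¬ (colorSubgraph G c i).Reachable (te j i) j.1 := by
    intro j i hreach
    refine hMnc ⟨te j, fun v hv => ?_⟩
    by_cases hvj : v = j.1
    · exact ⟨i, hvj ▸ hreach⟩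
    · exact hte j v (Finset.mem_erase.2 ⟨hvj, hv⟩)
  -- apply lemmaP
  have hcard : M.card ≤ 2 ^ r := by
    have := lemmaP (ι := {x // x ∈ M})
      (fun j i => κ i j.1) (fun j i => κ i (te j i))
      (fun j i h => hmiss j i ((κ_eq i _ _).1 h))
      (fun j k hjk => by
        obtain ⟨i, hi⟩ := hte k j.1
          (Finset.mem_erase.2 ⟨fun h => hjk (Subtype.ext h), j.2⟩)
        exact ⟨i, (κ_eq i _ _).2 hi⟩)
    rwa [Fintype.card_coe] at this
  -- a constant tuple at a vertex adjacent (or equal) to everything in M covers M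
  have hconst : ∀ x : V, (∀ v ∈ M, x = v ∨ G.Adj x v) → False := by
    intro x hx
    refine hMnc ⟨fun _ => x, fun v hv => ?_⟩
    rcases hx v hv with h | h
    · exact ⟨⟨0, hr⟩, h ▸ SimpleGraph.Reachable.refl x⟩
    · exact ⟨c s(x, v), SimpleGraph.Adj.reachable (And.intro h rfl)⟩
  by_cases hAdjAll : ∀ u ∈ M, ∀ w ∈ M, u = w ∨ G.Adj u w
  · obtain ⟨v₀, hv₀⟩ := hMne
    exact hconst v₀ (fun v hv => hAdjAll v₀ hv₀ v hv)
  · push_neg at hAdjAll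
    obtain ⟨u, hu, w, hw, huw, hnadj⟩ := hAdjAll
    -- counting argument
    set Ncl : V → Finset V := fun v => (G.neighborFinset v)ᶜ with hNcl
    have hNclcard : ∀ v : V, ((Ncl v).card : ℝ) ≤ (n : ℝ) / 2 ^ r := by
      intro v
      have hdv : (G.degree v : ℝ) ≥ ((1 : ℝ) - 1 / 2 ^ r) * (n : ℝ) := by
        have := G.minDegree_le_degree v
        have : (G.minDegree : ℝ) ≤ (G.degree v : ℝ) := by exact_mod_cast this
        linarith
      have hcc : (Ncl v).card = n - G.degree v := by
        simp only [hNcl, Finset.card_compl, SimpleGraph.card_neighborFinset_eq_degree, hn]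
      have hdle : G.degree v ≤ n := by
        rw [← SimpleGraph.card_neighborFinset_eq_degree]
        exact Finset.card_le_univ _
      have : ((Ncl v).card : ℝ) = (n : ℝ) - (G.degree v : ℝ) := by
        rw [hcc, Nat.cast_sub hdle]
      rw [this]
      have h2r : (0 : ℝ) < 2 ^ r := by positivity
      have : ((1 : ℝ) - 1 / 2 ^ r) * (n : ℝ) = (n : ℝ) - (n : ℝ) / 2 ^ r := by ring
      linarith
    have hmemNcl : ∀ x v : V, x ∈ Ncl v ↔ ¬ G.Adj v x := by
      intro x v
      simp [hNcl, SimpleGraph.mem_neighborFinset]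
    -- u, w are in both Ncl u and Ncl w
    have hpair : ({u, w} : Finset V) ⊆ Ncl u ∩ Ncl w := by
      intro x hx
      rcases Finset.mem_insert.1 hx with h | h
      · subst h
        exact Finset.mem_inter.2 ⟨(hmemNcl x x).2 (G.loopless.irrefl x),
          (hmemNcl x w).2 (fun h' => hnadj (h'.symm))⟩
      · rw [Finset.mem_singleton] at h; subst h
        exact Finset.mem_inter.2 ⟨(hmemNcl x u).2 hnadj, (hmemNcl x x).2 (G.loopless.irrefl x)⟩
    have hinter2 : 2 ≤ (Ncl u ∩ Ncl w).card := by
      have := Finset.card_le_card hpair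
      rwa [Finset.card_pair huw] at this
    set M' := (M.erase u).erase w with hM'
    have hsub : M.biUnion Ncl ⊆ (Ncl u ∪ Ncl w) ∪ M'.biUnion Ncl := by
      intro x hx
      obtain ⟨v, hv, hxv⟩ := Finset.mem_biUnion.1 hx
      by_cases h1 : v = u
      · exact Finset.mem_union.2 (Or.inl (Finset.mem_union.2 (Or.inl (h1 ▸ hxv))))
      by_cases h2 : v = w
      · exact Finset.mem_union.2 (Or.inl (Finset.mem_union.2 (Or.inr (h2 ▸ hxv))))
      exact Finset.mem_union.2 (Or.inr (Finset.mem_biUnion.2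
        ⟨v, Finset.mem_erase.2 ⟨h2, Finset.mem_erase.2 ⟨h1, hv⟩⟩, hxv⟩))
    have hkey : (M.biUnion Ncl).card + 2 ≤ ∑ v ∈ M, (Ncl v).card := by
      have c1 : (M.biUnion Ncl).card ≤ (Ncl u ∪ Ncl w).card + (M'.biUnion Ncl).card :=
        le_trans (Finset.card_le_card hsub) (Finset.card_union_le _ _)
      have c2 : (Ncl u ∪ Ncl w).card + (Ncl u ∩ Ncl w).card = (Ncl u).card + (Ncl w).card :=
        Finset.card_union_add_card_inter _ _
      have c3 : (M'.biUnion Ncl).card ≤ ∑ v ∈ M', (Ncl v).card :=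
        Finset.card_biUnion_le
      have c4 : (Ncl u).card + ((Ncl w).card + ∑ v ∈ M', (Ncl v).card)
          = ∑ v ∈ M, (Ncl v).card := by
        rw [hM', Finset.add_sum_erase _ (fun v => (Ncl v).card)
            (Finset.mem_erase.2 ⟨fun h => huw h.symm, hw⟩),
          Finset.add_sum_erase _ (fun v => (Ncl v).card) hu]
      omega
    -- real bound
    have hsumreal : (∑ v ∈ M, ((Ncl v).card : ℝ)) ≤ (n : ℝ) := by
      have hstep : (∑ v ∈ M, ((Ncl v).card : ℝ)) ≤ ∑ _v ∈ M, (n : ℝ) / 2 ^ r :=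
        Finset.sum_le_sum (fun v _ => hNclcard v)
      rw [Finset.sum_const, nsmul_eq_mul] at hstep
      have h2r : (0 : ℝ) < 2 ^ r := by positivity
      have hM2r : (M.card : ℝ) ≤ (2 : ℝ) ^ r := by exact_mod_cast hcard
      have hnn : (0 : ℝ) ≤ (n : ℝ) / 2 ^ r := by positivity
      have : (M.card : ℝ) * ((n : ℝ) / 2 ^ r) ≤ (2 : ℝ) ^ r * ((n : ℝ) / 2 ^ r) :=
        mul_le_mul_of_nonneg_right hM2r hnn
      have heq : (2 : ℝ) ^ r * ((n : ℝ) / 2 ^ r) = (n : ℝ) := by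
        field_simp
      linarith
    have hcardlt : (M.biUnion Ncl).card < n := by
      have h1 : ((M.biUnion Ncl).card : ℝ) + 2 ≤ (∑ v ∈ M, ((Ncl v).card : ℝ)) := by
        exact_mod_cast hkey
      have : ((M.biUnion Ncl).card : ℝ) < (n : ℝ) := by linarith
      exact_mod_cast this
    -- pick a common neighbour
    have hx : ∃ x : V, x ∉ M.biUnion Ncl := by
      by_contra h
      push_neg at h
      have : (Finset.univ : Finset V) ⊆ M.biUnion Ncl := fun x _ => h x
      have := Finset.card_le_card this
      rw [Finset.card_univ] at this
      omega
    obtain ⟨x, hxmem⟩ := hx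
    refine hconst x (fun v hv => Or.inr ?_)
    have : x ∉ Ncl v := fun h => hxmem (Finset.mem_biUnion.2 ⟨v, hv, h⟩)
    have := (not_iff_not.2 (hmemNcl x v)).1 this
    exact (not_not.1 this).symm
end

section
/- Let t ≥ 1 be an integer and let G be a finite hypergraph (a finite family of finite non-empty edges on a vertex set of size n) with maximum degree d ≥ 1, such that G is t-intersecting, i.e., any t of its edges have a common vertex. Then the cover number of G satisfies τ(G) ≤ n^(1/t)·(1 + log d), where log denotes the natural logarithm. -/
private lemma log_helper {q X : ℝ} (hq : 1 < q) (hX : q / (q - 1) ≤ X) :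
    1 ≤ q * Real.log X := by
  have hq0 : 0 < q := by linarith
  have hq1 : 0 < q - 1 := by linarith
  have hX0 : 0 < X := lt_of_lt_of_le (by positivity) hX
  have hexp : Real.exp (1 / q) ≤ q / (q - 1) := by
    have h1 : 1 - 1/q ≤ Real.exp (-(1/q)) := by
      have := Real.add_one_le_exp (-(1/q)); linarith
    have h2 : Real.exp (1/q) * (q - 1) ≤ q := by
      have h3 : Real.exp (1/q) * (1 - 1/q) ≤ 1 := by
        have := mul_le_mul_of_nonneg_left h1 (Real.exp_pos (1/q)).le
        rwa [← Real.exp_add, add_neg_cancel, Real.exp_zero] at this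
      have h4 := mul_le_mul_of_nonneg_right h3 hq0.le
      have heq : Real.exp (1/q) * (1 - 1/q) * q = Real.exp (1/q) * (q - 1) := by
        field_simp
      linarith [heq ▸ h4]
    rw [le_div_iff₀ hq1]; exact h2
  have hlog : 1 / q ≤ Real.log X :=
    (Real.le_log_iff_exp_le hX0).mpr (hexp.trans hX)
  calc (1:ℝ) = q * (1/q) := by field_simp
    _ ≤ q * Real.log X := mul_le_mul_of_nonneg_left hlog hq0.le

private lemma step {q : ℝ} (hq : 1 ≤ q) {m m' : ℕ} (h1 : 1 ≤ m) (hlt : m' < m)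
    (hm' : (m' : ℝ) ≤ (m : ℝ) - (m : ℝ) / q) :
    (if (m' : ℝ) ≤ q then (m' : ℝ) else q * (1 + Real.log ((m' : ℝ) / q))) + 1 ≤
    (if (m : ℝ) ≤ q then (m : ℝ) else q * (1 + Real.log ((m : ℝ) / q))) := by
  have hq0 : 0 < q := by linarith
  have hm0 : (0:ℝ) < m := by exact_mod_cast h1
  have hltR : (m' : ℝ) < m := by exact_mod_cast hlt
  split_ifs with h h' h'
  · -- both small
    have : (m' : ℝ) + 1 ≤ m := by exact_mod_cast hlt
    linarith
  · -- m' small, m big (q < m)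
    push_neg at h'
    by_cases hc : (m : ℝ) * (q - 1) ≤ q ^ 2
    · -- use log x ≥ 1 - 1/x
      have hlog : 1 - q / m ≤ Real.log ((m : ℝ) / q) := by
        have h5 := Real.log_le_sub_one_of_pos (show (0:ℝ) < q / m by positivity)
        have h6 : Real.log (q / m) = - Real.log ((m:ℝ) / q) := by
          rw [Real.log_div (ne_of_gt hq0) (ne_of_gt hm0),
              Real.log_div (ne_of_gt hm0) (ne_of_gt hq0)]
          ring
        linarith [h6 ▸ h5]
      have key : (m' : ℝ) + 1 ≤ q * (2 - q / m) := by
        have hpoly : ((m:ℝ) - m / q + 1) * (q * m) ≤ (q * (2 - q / m)) * (q * m) := by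
          have e1 : ((m:ℝ) - m / q + 1) * (q * m) = m^2 * q - m^2 + q * m := by
            field_simp
          have e2 : (q * (2 - q / m)) * (q * m) = 2 * q^2 * m - q^3 := by
            field_simp
          rw [e1, e2]
          nlinarith [mul_nonneg (sub_nonneg.2 hc) (sub_nonneg.2 h'.le)]
        have := le_of_mul_le_mul_right hpoly (by positivity)
        linarith
      calc (m' : ℝ) + 1 ≤ q * (2 - q / m) := key
        _ ≤ q * (1 + Real.log ((m:ℝ)/q)) := by
            apply mul_le_mul_of_nonneg_left _ hq0.le
            linarith
    · push_neg at hc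
      have hq1 : 1 < q := by
        by_contra hle
        push_neg at hle
        have : q = 1 := le_antisymm hle hq
        rw [this] at hc
        nlinarith
      have hX : q / (q - 1) ≤ (m : ℝ) / q := by
        rw [div_le_div_iff₀ (by linarith) hq0]
        nlinarith
      have := log_helper hq1 hX
      linarith
  · -- m' big, m small : impossible
    push_neg at h
    exact absurd (hltR.le.trans h') (not_le.mpr (by linarith))
  · -- both big
    push_neg at h h'
    have hq1 : 1 < q := by
      by_contra hle
      push_neg at hle
      have hqe : q = 1 := le_antisymm hle hq
      rw [hqe] at hm'
      simp at hm'
      rw [hm'] at h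
      simp at h
      linarith
    have hm'0 : (0:ℝ) < m' := lt_trans (by linarith) h
    have hX : q / (q - 1) ≤ (m : ℝ) / (m' : ℝ) := by
      rw [div_le_div_iff₀ (by linarith) hm'0]
      have hmul : (m':ℝ) * q ≤ m * q - m := by
        have h7 := mul_le_mul_of_nonneg_right hm' hq0.le
        have h8 : ((m:ℝ) - m / q) * q = m * q - m := by
          field_simp
        linarith [h8 ▸ h7]
      nlinarith
    have hkey := log_helper hq1 hX
    have hlogd : Real.log ((m:ℝ) / m') = Real.log ((m:ℝ)/q) - Real.log ((m':ℝ)/q) := by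
      rw [Real.log_div (ne_of_gt hm0) (ne_of_gt hm'0),
          Real.log_div (ne_of_gt hm0) (ne_of_gt hq0),
          Real.log_div (ne_of_gt hm'0) (ne_of_gt hq0)]
      ring
    rw [hlogd] at hkey
    nlinarith


private lemma countA {V : Type*} [Fintype V] [Nonempty V] {t : ℕ}
    (S : Set (Set V))
    (hintS : ∀ f : Fin t → Set V, (∀ i, f i ∈ S) → ∃ v : V, ∀ i, v ∈ f i) :
    S.ncard ^ t ≤ ∑ v : V, ({e ∈ S | v ∈ e} : Set (Set V)).ncard ^ t := by
  classical
  have hS : S.Finite := Set.toFinite S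
  set F : Finset (Set V) := hS.toFinset with hF
  have hcard : S.ncard = F.card := Set.ncard_eq_toFinset_card S hS
  have hex : ∀ f : Fin t → Set V, ∃ v : V, (∀ i, f i ∈ S) → ∀ i, v ∈ f i := by
    intro f
    by_cases h : ∀ i, f i ∈ S
    · obtain ⟨v, hv⟩ := hintS f h; exact ⟨v, fun _ => hv⟩
    · exact ⟨Classical.arbitrary V, fun h' => absurd h' h⟩
  choose φ hφ using hex
  set D : Finset (Fin t → Set V) := Fintype.piFinset (fun _ => F) with hDdef
  have hD : D.card = F.card ^ t := by
    rw [hDdef, Fintype.card_piFinset]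
    simp
  have hfib := Finset.card_eq_sum_card_fiberwise
    (f := φ) (s := D) (t := (Finset.univ : Finset V)) (fun x _ => Finset.mem_univ _)
  have hdegeq : ∀ v : V, (F.filter (fun e => v ∈ e)).card
      = ({e ∈ S | v ∈ e} : Set (Set V)).ncard := by
    intro v
    have : ({e ∈ S | v ∈ e} : Set (Set V)) = ↑(F.filter (fun e => v ∈ e)) := by
      ext e; simp only [Finset.coe_filter, hF, Set.Finite.mem_toFinset, Set.mem_setOf_eq]
    rw [this, Set.ncard_coe_finset]
  have hb : ∀ v : V, (D.filter fun f => φ f = v).card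
      ≤ ({e ∈ S | v ∈ e} : Set (Set V)).ncard ^ t := by
    intro v
    have hsub : D.filter (fun f => φ f = v)
        ⊆ Fintype.piFinset (fun _ : Fin t => F.filter (fun e => v ∈ e)) := by
      intro f hf
      simp only [Finset.mem_filter, hDdef, Fintype.mem_piFinset] at hf ⊢
      obtain ⟨hfD, hfv⟩ := hf
      have hmem : ∀ i, f i ∈ S := fun i => hS.mem_toFinset.mp (hfD i)
      intro i
      refine ⟨hfD i, ?_⟩
      have := hφ f hmem i
      rwa [hfv] at this
    calc (D.filter fun f => φ f = v).card
        ≤ (Fintype.piFinset (fun _ : Fin t => F.filter (fun e => v ∈ e))).card :=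
          Finset.card_le_card hsub
      _ = (F.filter (fun e => v ∈ e)).card ^ t := by
          rw [Fintype.card_piFinset]; simp
      _ = _ := by rw [hdegeq]
  calc S.ncard ^ t = D.card := by rw [hcard, hD]
    _ = ∑ v : V, (D.filter fun f => φ f = v).card := hfib
    _ ≤ _ := Finset.sum_le_sum (fun v _ => hb v)


private lemma qq_pow {n t : ℕ} (ht : 1 ≤ t) :
    (((n : ℝ) ^ ((1:ℝ)/(t:ℝ))) : ℝ) ^ t = (n : ℝ) := by
  have ht0 : (t : ℝ) ≠ 0 := by positivity
  rw [← Real.rpow_natCast ((n:ℝ) ^ ((1:ℝ)/(t:ℝ))) t, ← Real.rpow_mul (by positivity)]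
  rw [one_div, inv_mul_cancel₀ ht0, Real.rpow_one]

private lemma ncard_le_mul {V : Type*} [Fintype V] [Nonempty V] {t : ℕ} (ht : 1 ≤ t)
    (S : Set (Set V)) (B : ℕ)
    (hA : S.ncard ^ t ≤ ∑ v : V, ({e ∈ S | v ∈ e} : Set (Set V)).ncard ^ t)
    (hB : ∀ v : V, ({e ∈ S | v ∈ e} : Set (Set V)).ncard ≤ B) :
    (S.ncard : ℝ) ≤ (Fintype.card V : ℝ) ^ ((1:ℝ)/(t:ℝ)) * B := by
  set q : ℝ := (Fintype.card V : ℝ) ^ ((1:ℝ)/(t:ℝ)) with hq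
  have hq0 : 0 ≤ q := by positivity
  have hsum : S.ncard ^ t ≤ Fintype.card V * B ^ t := by
    calc S.ncard ^ t ≤ ∑ v : V, ({e ∈ S | v ∈ e} : Set (Set V)).ncard ^ t := hA
      _ ≤ ∑ _v : V, B ^ t := Finset.sum_le_sum (fun v _ => Nat.pow_le_pow_left (hB v) t)
      _ = Fintype.card V * B ^ t := by simp [Finset.sum_const, Finset.card_univ, mul_comm]
  have hreal : ((S.ncard : ℝ)) ^ t ≤ (q * B) ^ t := by
    rw [mul_pow, qq_pow ht]
    calc ((S.ncard : ℝ)) ^ t = ((S.ncard ^ t : ℕ) : ℝ) := by push_cast; ring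
      _ ≤ ((Fintype.card V * B ^ t : ℕ) : ℝ) := by exact_mod_cast hsum
      _ = (Fintype.card V : ℝ) * (B : ℝ) ^ t := by push_cast; ring
  exact le_of_pow_le_pow_left₀ (by omega) (by positivity) hreal

private lemma greedy {V : Type*} [Fintype V] [Nonempty V] {t : ℕ} (ht : 1 ≤ t)
    (E : Set (Set V))
    (hint : ∀ f : Fin t → Set V, (∀ i, f i ∈ E) → ∃ v : V, ∀ i, v ∈ f i)
    (countA : ∀ S : Set (Set V), S ⊆ E →
      S.ncard ^ t ≤ ∑ v : V, ({e ∈ S | v ∈ e} : Set (Set V)).ncard ^ t)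
    (ncard_le_mul : ∀ S : Set (Set V), S ⊆ E → ∀ B : ℕ,
      (∀ v : V, ({e ∈ S | v ∈ e} : Set (Set V)).ncard ≤ B) →
      (S.ncard : ℝ) ≤ (Fintype.card V : ℝ) ^ ((1:ℝ)/(t:ℝ)) * B)
    (step : ∀ {q : ℝ}, 1 ≤ q → ∀ {m m' : ℕ}, 1 ≤ m → m' < m →
      (m' : ℝ) ≤ (m : ℝ) - (m : ℝ) / q →
      (if (m' : ℝ) ≤ q then (m' : ℝ) else q * (1 + Real.log ((m' : ℝ) / q))) + 1 ≤
      (if (m : ℝ) ≤ q then (m : ℝ) else q * (1 + Real.log ((m : ℝ) / q))))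
    (m : ℕ) :
    ∀ S ⊆ E, S.ncard = m →
      ∃ T : Set V, IsCover S T ∧
        (T.ncard : ℝ) ≤ (if (m:ℝ) ≤ (Fintype.card V : ℝ) ^ ((1:ℝ)/(t:ℝ)) then (m:ℝ)
          else (Fintype.card V : ℝ) ^ ((1:ℝ)/(t:ℝ)) *
            (1 + Real.log ((m : ℝ) / (Fintype.card V : ℝ) ^ ((1:ℝ)/(t:ℝ))))) := by
  induction m using Nat.strong_induction_on with
  | _ m IH =>
    intro S hSE hm
    set q : ℝ := (Fintype.card V : ℝ) ^ ((1:ℝ)/(t:ℝ)) with hqdef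
    have hn1 : (1:ℝ) ≤ (Fintype.card V : ℝ) := by
      have := Fintype.card_pos (α := V); exact_mod_cast this
    have hq1 : 1 ≤ q := by
      rw [hqdef]
      calc (1:ℝ) = (1:ℝ) ^ ((1:ℝ)/(t:ℝ)) := (Real.one_rpow _).symm
        _ ≤ (Fintype.card V : ℝ) ^ ((1:ℝ)/(t:ℝ)) :=
            Real.rpow_le_rpow (by norm_num) hn1 (by positivity)
    have hq0 : 0 < q := by linarith
    rcases Nat.eq_zero_or_pos m with h0 | hpos
    · subst h0
      have hSempty : S = ∅ := (Set.ncard_eq_zero (Set.toFinite S)).mp hm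
      refine ⟨∅, ?_, ?_⟩
      · intro e he; rw [hSempty] at he; exact absurd he (Set.notMem_empty e)
      · rw [if_pos (by exact_mod_cast hq0.le.trans (le_refl q))]
        simp [Set.ncard_empty]
    · obtain ⟨v, -, hvmax⟩ := Finset.exists_max_image (Finset.univ : Finset V)
        (fun v : V => ({e ∈ S | v ∈ e} : Set (Set V)).ncard) Finset.univ_nonempty
      set dv : ℕ := ({e ∈ S | v ∈ e} : Set (Set V)).ncard with hdv
      have hdeg : (m : ℝ) ≤ q * dv := by
        rw [← hm]
        exact ncard_le_mul S hSE dv (fun w => hvmax w (Finset.mem_univ w))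
      have hdv1 : 1 ≤ dv := by
        by_contra hzero
        push_neg at hzero
        interval_cases dv
        · simp at hdeg
          have : (1:ℝ) ≤ m := by exact_mod_cast hpos
          linarith
      set S' : Set (Set V) := {e ∈ S | v ∉ e} with hS'def
      have hsub : S' ⊆ S := fun e he => he.1
      have hdvle : dv ≤ m := by
        rw [← hm, hdv]
        exact Set.ncard_le_ncard (Set.sep_subset S _) (Set.toFinite S)
      have hS'card : S'.ncard = m - dv := by
        have hdiff : S \ {e ∈ S | v ∈ e} = S' := by
          ext e
          simp only [Set.mem_diff, Set.mem_setOf_eq, hS'def, Set.mem_sep_iff]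
          tauto
        rw [← hdiff, Set.ncard_diff (Set.sep_subset S _) (Set.toFinite _), hm]
      have hlt : m - dv < m := by omega
      obtain ⟨T', hT'cov, hT'b⟩ := IH (m - dv) hlt S' (hsub.trans hSE) hS'card
      refine ⟨insert v T', ?_, ?_⟩
      · intro e he
        by_cases hv : v ∈ e
        · exact ⟨v, hv, Set.mem_insert v T'⟩
        · obtain ⟨u, hu1, hu2⟩ := hT'cov e ⟨he, hv⟩
          exact ⟨u, hu1, Set.mem_insert_of_mem v hu2⟩
      · have hcard : ((insert v T').ncard : ℝ) ≤ (T'.ncard : ℝ) + 1 := by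
          exact_mod_cast Set.ncard_insert_le v T'
        have hm'r : ((m - dv : ℕ) : ℝ) ≤ (m : ℝ) - (m : ℝ) / q := by
          have hcast : ((m - dv : ℕ) : ℝ) = (m : ℝ) - dv := by
            push_cast [Nat.cast_sub hdvle]; ring
          rw [hcast]
          have : (m : ℝ) / q ≤ dv := by
            rw [div_le_iff₀ hq0]
            linarith [hdeg, mul_comm q (dv : ℝ)]
          linarith
        have hstep := step hq1 hpos hlt hm'r
        linarith

/-- a `t`-intersecting hypergraph on `n` vertices with maximum degree
`d ≥ 1` has cover number at most `n^(1/t)·(1 + log d)`. -/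
theorem stmt19 (t : ℕ) (ht : 1 ≤ t) {V : Type*} [Fintype V]
    (E : Set (Set V)) (hne : ∀ e ∈ E, e.Nonempty)
    (d : ℕ) (hd1 : 1 ≤ d)
    (hd : IsGreatest (Set.range fun v : V => ({e ∈ E | v ∈ e} : Set (Set V)).ncard) d)
    (hint : ∀ f : Fin t → Set V, (∀ i, f i ∈ E) → ∃ v : V, ∀ i, v ∈ f i) :
    (coverNumber E : ℝ) ≤
      (Fintype.card V : ℝ) ^ ((1 : ℝ) / (t : ℝ)) * (1 + Real.log d) := by
  classical
  obtain ⟨v0, -⟩ := hd.1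
  haveI : Nonempty V := ⟨v0⟩
  set q : ℝ := (Fintype.card V : ℝ) ^ ((1:ℝ)/(t:ℝ)) with hqdef
  have hn1 : (1:ℝ) ≤ (Fintype.card V : ℝ) := by
    have := Fintype.card_pos (α := V); exact_mod_cast this
  have hq1 : 1 ≤ q := by
    rw [hqdef]
    calc (1:ℝ) = (1:ℝ) ^ ((1:ℝ)/(t:ℝ)) := (Real.one_rpow _).symm
      _ ≤ (Fintype.card V : ℝ) ^ ((1:ℝ)/(t:ℝ)) :=
          Real.rpow_le_rpow (by norm_num) hn1 (by positivity)
  have hq0 : 0 < q := by linarith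
  have hA : ∀ S : Set (Set V), S ⊆ E →
      S.ncard ^ t ≤ ∑ v : V, ({e ∈ S | v ∈ e} : Set (Set V)).ncard ^ t :=
    fun S hSE => countA S (fun f hf => hint f (fun i => hSE (hf i)))
  have hM : ∀ S : Set (Set V), S ⊆ E → ∀ B : ℕ,
      (∀ v : V, ({e ∈ S | v ∈ e} : Set (Set V)).ncard ≤ B) →
      (S.ncard : ℝ) ≤ (Fintype.card V : ℝ) ^ ((1:ℝ)/(t:ℝ)) * B :=
    fun S hSE B hB => ncard_le_mul ht S B (hA S hSE) hB
  obtain ⟨T, hTcov, hTb⟩ := greedy ht E hint hA hM (fun {q} hq {m m'} h1 h2 h3 => step hq h1 h2 h3)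
    E.ncard E subset_rfl rfl
  have h1 : coverNumber E ≤ T.ncard := Nat.sInf_le ⟨T, rfl, hTcov⟩
  have hmd : (E.ncard : ℝ) ≤ q * d := hM E subset_rfl d (fun v => hd.2 ⟨v, rfl⟩)
  have hlogd : 0 ≤ Real.log d := Real.log_nonneg (by exact_mod_cast hd1)
  have hF : (if ((E.ncard : ℕ) : ℝ) ≤ q then ((E.ncard : ℕ) : ℝ)
      else q * (1 + Real.log ((E.ncard : ℝ) / q))) ≤ q * (1 + Real.log d) := by
    split_ifs with h
    · calc ((E.ncard : ℕ) : ℝ) ≤ q := h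
        _ = q * 1 := (mul_one q).symm
        _ ≤ q * (1 + Real.log d) := by
            apply mul_le_mul_of_nonneg_left _ hq0.le
            linarith
    · push_neg at h
      have hpos : (0:ℝ) < (E.ncard : ℝ) / q := by
        apply div_pos _ hq0
        linarith
      have hdiv : (E.ncard : ℝ) / q ≤ d := by
        rw [div_le_iff₀ hq0]
        linarith [mul_comm q (d : ℝ), hmd]
      have hlog : Real.log ((E.ncard : ℝ) / q) ≤ Real.log d :=
        Real.log_le_log hpos hdiv
      apply mul_le_mul_of_nonneg_left _ hq0.le
      linarith
  calc (coverNumber E : ℝ) ≤ (T.ncard : ℝ) := by exact_mod_cast h1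
    _ ≤ _ := hTb
    _ ≤ q * (1 + Real.log d) := hF
end
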